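/- Let a, b, c, d, g, h, u ∈ ℝ with a ≠ 0, b ≠ 0, c ≠ 0, d ≠ 0, and set D := cd − bc − ad; assume D ≠ 0. Consider the 6×6 matrix M̂ with rows (in the order labeled 1, X, Y, X², XY, Y²): row 1 = ((b²c + a²d + cdu)/(cd), a+u, b+u, c+u, u, d+u); row 2 = (a+u, c+u, u, (c²+au)/a, u, u); row 3 = (b+u, u, d+u, u, u, (d²+bu)/b); row 4 = (c+u, (c²+au)/a, u, g+u, u, u); row 5 = (u, u, u, u, u, u); row 6 = (d+u, u, (d²+bu)/b, u, u, h+u). Then the column of M̂ labeled XY satisfies the relation XY = ξ·1 − η·X − θ·Y in the column space of M̂, where ξ = cd/D, η = ad/D, θ = bc/D; that is, column 5 of M̂ equals ξ times column 1 minus η times column 2 minus θ times column 3. -/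

import Mathlib

/-- For the explicit rank-5 summand `M̂` arising in the proof of the
main theorem, the column labeled `XY` (the fifth column) satisfies the relation
`XY = ξ·1 − η·X − θ·Y` with `ξ = cd/D`, `η = ad/D`, `θ = bc/D`, `D = cd − bc − ad`. -/
theorem column_relation_of_Mhat
    (a b c d g h u : ℝ)
    (ha : a ≠ 0) (hb : b ≠ 0) (hc : c ≠ 0) (hd : d ≠ 0)
    (hD : c * d - b * c - a * d ≠ 0)
    (M : Matrix (Fin 6) (Fin 6) ℝ)
    (hM : M = !![(b^2*c + a^2*d + c*d*u)/(c*d), a + u, b + u, c + u, u, d + u;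
                 a + u, c + u, u, (c^2 + a*u)/a, u, u;
                 b + u, u, d + u, u, u, (d^2 + b*u)/b;
                 c + u, (c^2 + a*u)/a, u, g + u, u, u;
                 u, u, u, u, u, u;
                 d + u, u, (d^2 + b*u)/b, u, u, h + u]) :
    ∀ i : Fin 6,
      M i 4 = (c*d / (c*d - b*c - a*d)) * M i 0
        - (a*d / (c*d - b*c - a*d)) * M i 1
        - (b*c / (c*d - b*c - a*d)) * M i 2 := by
  subst hM
  intro i
  fin_cases i <;> simp [Matrix.vecHead, Matrix.vecTail, Matrix.cons_val_succ, Matrix.cons_val_zero, Matrix.cons_val_one, show ((5:Fin 6)) = Fin.succ 4 from rfl] <;>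
    (rw [eq_comm, div_mul_eq_mul_div, div_mul_eq_mul_div, div_mul_eq_mul_div, div_sub_div_same, div_sub_div_same, div_eq_iff hD]; field_simp; ring)
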